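/- Let V be a ℤ₂-graded complex vector space and B a consistent, super positive sesquilinear form on V. If A : V → V is an odd linear operator which is B-super-skew-adjoint and satisfies A ∘ A = 0, then A = 0. (This is the core of the paper's Proposition 3.1: in any unitary representation of an Abelian Lie superalgebra, every odd element ξ satisfies [ξ,ξ] = 0, hence acts by such an operator A, and therefore acts by zero.) -/

import Mathlib

/-- core of the paper's Proposition 3.1.
Let `V` be a ℤ₂-graded complex vector space (even part `V0`, odd part `V1`,
internal direct sum) and `B` a consistent, super positive sesquilinear form on `V`.
If `A : V → V` is an odd linear operator which is `B`-super-skew-adjoint and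
satisfies `A ∘ A = 0`, then `A = 0`. -/
theorem stmt_0
    (V : Type*) [AddCommGroup V] [Module ℂ V]
    (V0 V1 : Submodule ℂ V) (hcompl : IsCompl V0 V1)
    (B : V → V → ℂ)
    -- `B` is ℂ-linear in the first argument
    (hB1 : ∀ (a : ℂ) (u u' v : V), B (a • u + u') v = a * B u v + B u' v)
    -- `B` is conjugate-linear in the second argument
    (hB2 : ∀ (a : ℂ) (u v v' : V), B u (a • v + v') = (starRingEnd ℂ) a * B u v + B u v')
    -- `B` is consistent
    (hcons : ∀ u ∈ V0, ∀ v ∈ V1, B u v = 0 ∧ B v u = 0)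
    -- `B` is super positive
    (hpos0 : ∀ v ∈ V0, v ≠ 0 → ∃ t : ℝ, 0 < t ∧ B v v = (t : ℂ))
    (hpos1 : ∀ v ∈ V1, v ≠ 0 → ∃ t : ℝ, 0 < t ∧ B v v = Complex.I * (t : ℂ))
    -- `A` is an odd linear operator
    (A : V →ₗ[ℂ] V)
    (hodd0 : ∀ v ∈ V0, A v ∈ V1) (hodd1 : ∀ v ∈ V1, A v ∈ V0)
    -- `A` is `B`-super-skew-adjoint: `B (A v) w + (-1)^|v| * B v (A w) = 0`
    (hskew0 : ∀ v ∈ V0, ∀ w : V, B (A v) w + B v (A w) = 0)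
    (hskew1 : ∀ v ∈ V1, ∀ w : V, B (A v) w - B v (A w) = 0)
    -- `A ∘ A = 0`
    (hAA : ∀ v : V, A (A v) = 0) :
    A = 0 := by
  have hBzero : ∀ u : V, B u 0 = 0 := by
    intro u
    have := hB2 1 u 0 0
    simp at this
    linear_combination this
  have h0 : ∀ v ∈ V0, A v = 0 := by
    intro v hv
    by_contra hne
    obtain ⟨t, ht, hBt⟩ := hpos1 (A v) (hodd0 v hv) hne
    have hs := hskew0 v hv (A v)
    rw [hAA v, hBzero, hBt] at hs
    have hI : Complex.I * (t : ℂ) = 0 := by linear_combination hs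
    have : (t : ℂ) = 0 := by
      rcases mul_eq_zero.mp hI with h | h
      · exact absurd h Complex.I_ne_zero
      · exact h
    simp at this
    exact absurd this ht.ne'
  have h1 : ∀ v ∈ V1, A v = 0 := by
    intro v hv
    by_contra hne
    obtain ⟨t, ht, hBt⟩ := hpos0 (A v) (hodd1 v hv) hne
    have hs := hskew1 v hv (A v)
    rw [hAA v, hBzero, hBt] at hs
    simp at hs
    exact absurd hs ht.ne'
  ext v
  obtain ⟨v0, v1, hv0, hv1, rfl⟩ := Submodule.codisjoint_iff_exists_add_eq.mp hcompl.codisjoint v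
  simp [map_add, h0 v0 hv0, h1 v1 hv1]
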